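/- Let p, p', s ∈ B_n ⊂ B_{n+1}. Then p' = s*p holds in B_{n+1} if and only if p' δ_{n+1}⁻¹ = s · (d(p) σ₁ δ_{n+1}⁻¹) · s⁻¹ holds in B_{n+1}, where a*b = a · d(b) · σ₁ · d(a)⁻¹ and δ_{n+1} = σ_n ⋯ σ₁. -/

import Mathlib

/-- Braid relations for the infinite braid group: generator `i : ℕ` represents σ_{i+1}. -/
def braidRelsInf : Set (FreeGroup ℕ) :=
  {r | ∃ i j : ℕ,
    (j = i + 1 ∧ r = FreeGroup.of i * FreeGroup.of j * FreeGroup.of i *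
        (FreeGroup.of j * FreeGroup.of i * FreeGroup.of j)⁻¹) ∨
    (i + 2 ≤ j ∧ r = FreeGroup.of i * FreeGroup.of j * (FreeGroup.of j * FreeGroup.of i)⁻¹)}

/-- The braid group B_∞ on infinitely many strands. -/
abbrev BInf : Type := PresentedGroup braidRelsInf

/-- `sigmaInf i` is the Artin generator σ_{i+1} of `BInf` (0-indexed). -/
def sigmaInf (i : ℕ) : BInf := PresentedGroup.of i

/-- Braid relations on `n` generators: `B n` below is the braid group B_{n+1} on
n+1 strands; the generator `i : Fin n` represents σ_{i+1}. -/
def braidRels (n : ℕ) : Set (FreeGroup (Fin n)) :=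
  {r | ∃ i j : Fin n,
    ((j : ℕ) = (i : ℕ) + 1 ∧ r = FreeGroup.of i * FreeGroup.of j * FreeGroup.of i *
        (FreeGroup.of j * FreeGroup.of i * FreeGroup.of j)⁻¹) ∨
    ((i : ℕ) + 2 ≤ (j : ℕ) ∧ r = FreeGroup.of i * FreeGroup.of j *
        (FreeGroup.of j * FreeGroup.of i)⁻¹)}

/-- `B n` is the braid group on n+1 strands (the paper's B_{n+1}), with n generators. -/
abbrev B (n : ℕ) : Type := PresentedGroup (braidRels n)

/-- `σ i` for `i : Fin n` is the Artin generator σ_{i+1} of `B n` (0-indexed). -/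
def σ {n : ℕ} (i : Fin n) : B n := PresentedGroup.of i

/-- `delta n = σ_n ⋯ σ_1` (the paper's δ_{n+1} when `B n` is the paper's B_{n+1}). -/
def delta (n : ℕ) : B n := ((List.ofFn (fun i : Fin n => σ i)).reverse).prod

/-- `Delta n = (σ_n ⋯ σ_1)(σ_n ⋯ σ_2) ⋯ (σ_n)`, the paper's Δ_{n+1}. -/
def Delta (n : ℕ) : B n :=
  (List.ofFn (fun k : Fin n =>
    (((List.ofFn (fun i : Fin n => σ i)).reverse).take (n - (k : ℕ))).prod)).prod

/- ### Auxiliary lemmas -/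

lemma rel_eq_one {n : ℕ} {r : FreeGroup (Fin n)} (h : r ∈ braidRels n) :
    PresentedGroup.mk (braidRels n) r = 1 :=
  (QuotientGroup.eq_one_iff _).mpr (Subgroup.subset_normalClosure h)

lemma braid_comm {n : ℕ} (i j : Fin n) (h : (i : ℕ) + 2 ≤ (j : ℕ)) :
    σ i * σ j = σ j * σ i := by
  have h1 := rel_eq_one (r := FreeGroup.of i * FreeGroup.of j *
      (FreeGroup.of j * FreeGroup.of i)⁻¹) ⟨i, j, Or.inr ⟨h, rfl⟩⟩
  have h2 : σ i * σ j * (σ j * σ i)⁻¹ = 1 := by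
    simpa [σ, PresentedGroup.of, map_mul, map_inv] using h1
  exact mul_inv_eq_one.mp h2

lemma braid_braid {n : ℕ} (i j : Fin n) (h : (j : ℕ) = (i : ℕ) + 1) :
    σ i * σ j * σ i = σ j * σ i * σ j := by
  have h1 := rel_eq_one (r := FreeGroup.of i * FreeGroup.of j * FreeGroup.of i *
      (FreeGroup.of j * FreeGroup.of i * FreeGroup.of j)⁻¹) ⟨i, j, Or.inl ⟨h, rfl⟩⟩
  have h2 : σ i * σ j * σ i * (σ j * σ i * σ j)⁻¹ = 1 := by
    simpa [σ, PresentedGroup.of, map_mul, map_inv] using h1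
  exact mul_inv_eq_one.mp h2

/-- σ with a natural-number index (1 when out of range). -/
def sig (n k : ℕ) : B n := if h : k < n then σ ⟨k, h⟩ else 1

lemma sig_comm {n j k : ℕ} (h : j + 2 ≤ k) (hk : k < n) :
    sig n j * sig n k = sig n k * sig n j := by
  have hj : j < n := by omega
  simp only [sig, dif_pos hj, dif_pos hk]
  exact braid_comm _ _ h

lemma sig_braid {n j : ℕ} (h : j + 1 < n) :
    sig n j * sig n (j+1) * sig n j = sig n (j+1) * sig n j * sig n (j+1) := by
  have hj : j < n := by omega
  simp only [sig, dif_pos hj, dif_pos h]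
  exact braid_braid _ _ rfl

/-- Partial product `σ_{k-1} ⋯ σ_1 σ_0`. -/
def D (n k : ℕ) : B n := (((List.ofFn (fun i : Fin n => σ i)).take k).reverse).prod

lemma D_zero (n : ℕ) : D n 0 = 1 := by simp [D]

lemma D_succ (n k : ℕ) (h : k < n) : D n (k+1) = sig n k * D n k := by
  have hlen : k < (List.ofFn (fun i : Fin n => σ i)).length := by simpa using h
  rw [D, D, ← List.take_concat_get hlen, List.concat_eq_append, List.reverse_append]
  simp [sig, dif_pos h, List.get_ofFn]

lemma D_top (n : ℕ) : D n n = delta n := by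
  rw [D, delta, List.take_of_length_le (by simp)]

lemma L1 {n : ℕ} : ∀ k j : ℕ, k + 1 ≤ j → j < n →
    sig n j * D n k = D n k * sig n j := by
  intro k
  induction k with
  | zero => intro j _ _; rw [D_zero]; group
  | succ k ih =>
    intro j hkj hj
    rw [D_succ n k (by omega), ← mul_assoc,
      (sig_comm (j := k) (k := j) (by omega) hj).symm, mul_assoc,
      ih j (by omega) hj, mul_assoc]

lemma L2 {n : ℕ} : ∀ k j : ℕ, j + 2 ≤ k → k ≤ n →
    sig n j * D n k = D n k * sig n (j+1) := by
  intro k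
  induction k with
  | zero => intro j h; omega
  | succ k ih =>
    intro j hjk hkn
    rcases eq_or_lt_of_le hjk with heq | hlt
    · -- k = j + 1
      have hk : k = j + 1 := by omega
      subst hk
      have hj1 : j + 1 < n := by omega
      rw [D_succ n (j+1) hj1, D_succ n j (by omega)]
      calc sig n j * (sig n (j+1) * (sig n j * D n j))
          = (sig n j * sig n (j+1) * sig n j) * D n j := by group
        _ = (sig n (j+1) * sig n j * sig n (j+1)) * D n j := by rw [sig_braid hj1]
        _ = sig n (j+1) * sig n j * (sig n (j+1) * D n j) := by group
        _ = sig n (j+1) * sig n j * (D n j * sig n (j+1)) := by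
            rw [L1 j (j+1) (by omega) hj1]
        _ = sig n (j+1) * (sig n j * D n j) * sig n (j+1) := by group
    · -- j + 2 ≤ k
      have hk : k < n := by omega
      rw [D_succ n k hk, ← mul_assoc, sig_comm (by omega) hk, mul_assoc,
        ih j (by omega) (by omega), mul_assoc]

lemma sigma_delta {m : ℕ} (i : Fin m) :
    σ i.castSucc * delta (m+1) = delta (m+1) * σ i.succ := by
  have h := L2 (n := m+1) (m+1) (i : ℕ) (by omega) le_rfl
  rw [D_top] at h
  have h1 : sig (m+1) (i : ℕ) = σ i.castSucc := by
    rw [sig, dif_pos (by omega)]; rfl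
  have h2 : sig (m+1) ((i : ℕ)+1) = σ i.succ := by
    rw [sig, dif_pos (by omega)]; rfl
  rwa [h1, h2] at h

lemma iota_delta {m : ℕ} (ι d : B m →* B (m + 1))
    (hι : ∀ i : Fin m, ι (σ i) = σ i.castSucc)
    (hd : ∀ i : Fin m, d (σ i) = σ i.succ) (x : B m) :
    ι x * delta (m+1) = delta (m+1) * d x := by
  have hhom : (MulAut.conj (delta (m+1))⁻¹).toMonoidHom.comp ι = d := by
    apply PresentedGroup.ext
    intro i
    show (delta (m+1))⁻¹ * ι (PresentedGroup.of i) * ((delta (m+1))⁻¹)⁻¹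
        = d (PresentedGroup.of i)
    rw [show ι (PresentedGroup.of i) = σ i.castSucc from hι i,
        show d (PresentedGroup.of i) = σ i.succ from hd i, inv_inv,
        mul_assoc, sigma_delta i]
    group
  have h2 : (delta (m+1))⁻¹ * ι x * ((delta (m+1))⁻¹)⁻¹ = d x :=
    congrArg (fun f : B m →* B (m+1) => f x) hhom
  rw [inv_inv] at h2
  rw [← h2]; group

/-- Proposition 1 of the paper. Here `B (m+1)` is the paper's B_{n+1}
(with n = m+1) and `B m` is the paper's B_n; `ι : B m →* B (m+1)` is the natural
inclusion and `d` the shift homomorphism. For p, p', s ∈ B_n: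
p' = s*p in B_{n+1} iff p'δ_{n+1}⁻¹ = s (d(p)σ₁δ_{n+1}⁻¹) s⁻¹ in B_{n+1}. -/
theorem shifted_conjugacy_iff_conjugacy (m : ℕ) (ι d : B m →* B (m + 1))
    (hι : ∀ i : Fin m, ι (σ i) = σ i.castSucc)
    (hd : ∀ i : Fin m, d (σ i) = σ i.succ)
    (p p' s : B m) :
    ι p' = ι s * d p * σ (0 : Fin (m + 1)) * (d s)⁻¹ ↔
    ι p' * (delta (m + 1))⁻¹ =
      ι s * (d p * σ (0 : Fin (m + 1)) * (delta (m + 1))⁻¹) * (ι s)⁻¹ := by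
  have key := iota_delta ι d hι hd s
  have hds : d s = (delta (m+1))⁻¹ * ι s * delta (m+1) := by
    rw [mul_assoc, key]; group
  constructor
  · intro h
    rw [h, hds]
    group
  · intro h
    have h' : ι p' = (ι p' * (delta (m+1))⁻¹) * delta (m+1) := by group
    rw [h', h, hds]
    group
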